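/- Let $N \ge 1$ and let $\tilde{n}_0 \le \tilde{n}_1 \le \cdots \le \tilde{n}_N$ be positive integers. Define $p_0 = \tilde{n}_0$, $p_k = \sum_{l=0}^{k} \tilde{n}_l - k\,\tilde{n}_{k+1}$ for $k = 1, \ldots, N-1$, and $p_N = -\infty$. Then for every $i \in \{1, \ldots, \tilde{n}_0\}$ with $p_k \le i \le p_{k-1}$ (for some $k \in \{1,\ldots,N\}$), the minimum $\min_{m=1,\ldots,N} \lfloor (\sum_{l=0}^{m} \tilde{n}_l - i)/m \rfloor$ is attained at $m = k$, i.e. $c_i = 1 - i + \lfloor (\sum_{l=0}^{k} \tilde{n}_l - i)/k \rfloor$. -/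

import Mathlib

lemma fdiv_le_fdiv_cross (x y m m' : ℤ) (hm : 0 < m) (hm' : 0 < m')
    (h : x * m' ≤ y * m) : x.fdiv m ≤ y.fdiv m' := by
  rw [Int.fdiv_eq_ediv_of_nonneg _ hm.le, Int.fdiv_eq_ediv_of_nonneg _ hm'.le,
    Int.le_ediv_iff_mul_le hm']
  have h1 : x / m * m ≤ x := Int.ediv_mul_le x hm.ne'
  have : (x / m * m') * m ≤ y * m := by nlinarith
  exact le_of_mul_le_mul_right this hm

/-- On the interval `p_k ≤ i ≤ p_{k-1}` (with `p_N = -∞`, encoded by the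
implication `k < N → p k ≤ i`), the minimum defining the DMT coefficient `c i` of a
Rayleigh product channel is attained at `m = k`. -/
theorem rp_coeff_attained (N : ℕ) (hN : 1 ≤ N) (n : ℕ → ℤ)
    (hpos : ∀ l, l ≤ N → 0 < n l)
    (hmono : ∀ l, l < N → n l ≤ n (l + 1))
    (p : ℕ → ℤ)
    (hp0 : p 0 = n 0)
    (hpk : ∀ k, 1 ≤ k → k ≤ N - 1 →
      p k = (∑ l ∈ Finset.range (k + 1), n l) - (k : ℤ) * n (k + 1))
    (k : ℕ) (hk1 : 1 ≤ k) (hkN : k ≤ N)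
    (i : ℤ) (hi1 : 1 ≤ i) (hi0 : i ≤ n 0)
    (hlow : k < N → p k ≤ i) (hhigh : i ≤ p (k - 1)) :
    (Finset.Icc 1 N).inf' (Finset.nonempty_Icc.mpr hN)
        (fun m => Int.fdiv ((∑ l ∈ Finset.range (m + 1), n l) - i) (m : ℤ))
      = Int.fdiv ((∑ l ∈ Finset.range (k + 1), n l) - i) (k : ℤ) := by
  set S : ℕ → ℤ := fun m => ∑ l ∈ Finset.range (m + 1), n l with hS
  set f : ℕ → ℤ := fun m => Int.fdiv (S m - i) (m : ℤ) with hf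
  have hSsucc : ∀ m : ℕ, S (m + 1) = S m + n (m + 1) := fun m => by
    simp [hS, Finset.sum_range_succ]
  -- single step of monotonicity of p
  have pstep : ∀ m : ℕ, 1 ≤ m → m + 1 ≤ N - 1 → p (m + 1) ≤ p m := by
    intro m hm1 hmN
    rw [hpk m hm1 (by omega), hpk (m + 1) (by omega) hmN]
    have hmn : n (m + 1) ≤ n (m + 2) := hmono (m + 1) (by omega)
    simp only [Finset.sum_range_succ]
    push_cast
    nlinarith [hmn]
  -- for m ≥ k (and m ≤ N-1), p m ≤ i
  have hA' : ∀ m : ℕ, k ≤ m → m ≤ N - 1 → p m ≤ i := by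
    intro m
    induction m with
    | zero => intro h1 _; have : k = 0 := by omega
              exact absurd this (by omega)
    | succ m ih =>
      intro h1 h2
      rcases eq_or_lt_of_le h1 with h | h
      · exact h ▸ hlow (by omega)
      · exact le_trans (pstep m (by omega) h2) (ih (by omega) (by omega))
  -- increasing step of f for p m ≤ i
  have fstep_up : ∀ m : ℕ, 1 ≤ m → m ≤ N - 1 → p m ≤ i → f m ≤ f (m + 1) := by
    intro m hm1 hmN hpm
    apply fdiv_le_fdiv_cross _ _ _ _ (by exact_mod_cast hm1) (by positivity)
    rw [hSsucc]
    rw [hpk m hm1 hmN] at hpm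
    have hpm' : S m - (m : ℤ) * n (m + 1) ≤ i := hpm
    push_cast
    nlinarith [hpm']
  -- decreasing step of f for i ≤ p m
  have fstep_down : ∀ m : ℕ, 1 ≤ m → m ≤ N - 1 → i ≤ p m → f (m + 1) ≤ f m := by
    intro m hm1 hmN hpm
    apply fdiv_le_fdiv_cross _ _ _ _ (by positivity) (by exact_mod_cast hm1)
    rw [hSsucc]
    rw [hpk m hm1 hmN] at hpm
    have hpm' : i ≤ S m - (m : ℤ) * n (m + 1) := hpm
    push_cast
    nlinarith [hpm']
  -- for m ≥ k, f k ≤ f m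
  have hA : ∀ m : ℕ, k ≤ m → m ≤ N → f k ≤ f m := by
    intro m
    induction m with
    | zero => intro h1 _; omega
    | succ m ih =>
      intro h1 h2
      rcases eq_or_lt_of_le h1 with h | h
      · rw [h]
      · have hk_le : k ≤ m := by omega
        exact le_trans (ih hk_le (by omega))
          (fstep_up m (by omega) (by omega) (hA' m hk_le (by omega)))
  -- for 1 ≤ m ≤ k - 1, i ≤ p m
  have hB : ∀ m : ℕ, 1 ≤ m → m ≤ k - 1 → i ≤ p m := by
    have key : ∀ j : ℕ, ∀ m : ℕ, 1 ≤ m → m + j = k - 1 → i ≤ p m := by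
      intro j
      induction j with
      | zero => intro m hm1 hmk; have : m = k - 1 := by omega
                rw [this]; exact hhigh
      | succ j ih =>
        intro m hm1 hmk
        have h1 : i ≤ p (m + 1) := ih (m + 1) (by omega) (by omega)
        exact le_trans h1 (pstep m hm1 (by omega))
    intro m hm1 hmk
    exact key (k - 1 - m) m hm1 (by omega)
  -- for 1 ≤ m ≤ k, f k ≤ f m
  have hC : ∀ m : ℕ, 1 ≤ m → m ≤ k → f k ≤ f m := by
    have key : ∀ j : ℕ, ∀ m : ℕ, 1 ≤ m → m + j = k → f k ≤ f m := by
      intro j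
      induction j with
      | zero => intro m _ hmk; have : m = k := by omega
                rw [this]
      | succ j ih =>
        intro m hm1 hmk
        have h1 : f k ≤ f (m + 1) := ih (m + 1) (by omega) (by omega)
        exact le_trans h1 (fstep_down m hm1 (by omega) (hB m hm1 (by omega)))
    intro m hm1 hmk
    exact key (k - m) m hm1 (by omega)
  apply le_antisymm
  · exact Finset.inf'_le _ (Finset.mem_Icc.mpr ⟨hk1, hkN⟩)
  · apply Finset.le_inf'
    intro m hm
    rw [Finset.mem_Icc] at hm
    rcases le_or_gt m k with h | h
    · exact hC m hm.1 h
    · exact hA m h.le hm.2
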